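/- Let q ≥ 3 and let G be a connected tree on the vertex set {1,…,s} with s ≥ 3, and let C_G be its edge code. Let W ⊆ ℕ be the set of Hamming weights of the nonzero codewords of C_G. Then for every integer t with 1 ≤ t ≤ (s−1)/2, the t-th smallest element of W equals (q−1)^s − (q−1)^{s−1} + (q−1)^{s−2} − ⋯ + (−1)^{2t+1}(q−1)^{s−(2t−1)}, i.e. Σ_{i=0}^{2t−1} (−1)^i (q−1)^{s−i}. -/

import Mathlib

open MvPolynomial

/-- The affine torus `T = (K*)^s`: points of `K^s` with all coordinates nonzero. -/
abbrev Torus (s : ℕ) (K : Type) [Zero K] := {P : Fin s → K // ∀ i, P i ≠ 0}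

/-- The evaluation map `f ↦ (f(P))_{P ∈ T}` as a linear map. -/
noncomputable def evalTorus (s : ℕ) (K : Type) [Field K] :
    MvPolynomial (Fin s) K →ₗ[K] (Torus s K → K) :=
  LinearMap.pi fun P => (aeval (P.1 : Fin s → K)).toLinearMap

/-- The edge code of a hypergraph with edge set `E` on vertex set `{1,…,s}`:
the image under evaluation of the span of the squarefree monomials `∏_{j ∈ e} t_j`. -/
noncomputable def edgeCode (s : ℕ) (K : Type) [Field K] (E : Set (Finset (Fin s))) :
    Submodule K (Torus s K → K) :=
  (Submodule.span K ((fun e : Finset (Fin s) => ∏ j ∈ e, X j) '' E)).map (evalTorus s K)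

/-- Hamming weight of a word indexed by the torus. -/
noncomputable def wt {s : ℕ} {K : Type} [Field K] (c : Torus s K → K) : ℕ :=
  {P | c P ≠ 0}.ncard

/-- Minimum distance of a linear code: the least Hamming weight of a nonzero codeword. -/
noncomputable def minDist {s : ℕ} {K : Type} [Field K] (C : Submodule K (Torus s K → K)) : ℕ :=
  sInf {w : ℕ | ∃ c ∈ C, c ≠ 0 ∧ wt c = w}

/-- The squarefree monomial `t_i t_j` attached to an edge `{i,j}` of a simple graph. -/
noncomputable def edgeMonSym2 (s : ℕ) (K : Type) [Field K] (e : Sym2 (Fin s)) :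
    MvPolynomial (Fin s) K :=
  Sym2.lift ⟨fun i j => X i * X j, fun _ _ => mul_comm _ _⟩ e

/-- The edge code of a simple graph on `{1,…,s}`. -/
noncomputable def graphCode (s : ℕ) (K : Type) [Field K] (G : SimpleGraph (Fin s)) :
    Submodule K (Torus s K → K) :=
  (Submodule.span K (edgeMonSym2 s K '' G.edgeSet)).map (evalTorus s K)


/-! ### Auxiliary machinery -/

section Aux

def Aint (Q : ℤ) (s k : ℕ) : ℤ := ∑ i ∈ Finset.range k, (-1) ^ i * Q ^ (s - i)

lemma Aint_succ (Q : ℤ) (s k : ℕ) :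
    Aint Q s (k + 1) = Aint Q s k + (-1) ^ k * Q ^ (s - k) := by
  simp [Aint, Finset.sum_range_succ]

lemma Aint_ord (Q : ℤ) (hQ : 2 ≤ Q) (s : ℕ) :
    ∀ m j : ℕ, j + m + 1 ≤ s →
      0 < (-1) ^ j * (Aint Q s (j + m + 1) - Aint Q s j) ∧
      (-1) ^ j * (Aint Q s (j + m + 1) - Aint Q s j) ≤ Q ^ (s - j) := by
  intro m
  induction m with
  | zero =>
    intro j hj
    rw [Aint_succ]
    have h1 : (-1 : ℤ) ^ j * ((-1) ^ j * Q ^ (s - j)) = Q ^ (s - j) := by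
      rw [← mul_assoc, ← pow_add]
      simp [Even.neg_one_pow (Even.add_self j)]
    constructor
    · rw [show Aint Q s j + (-1) ^ j * Q ^ (s - j) - Aint Q s j = (-1) ^ j * Q ^ (s - j) from by
        ring, h1]
      positivity
    · rw [show Aint Q s j + (-1) ^ j * Q ^ (s - j) - Aint Q s j = (-1) ^ j * Q ^ (s - j) from by
        ring, h1]
  | succ m ih =>
    intro j hj
    have hIH := ih (j + 1) (by omega)
    have hsucc : Aint Q s (j + 1) = Aint Q s j + (-1) ^ j * Q ^ (s - j) := Aint_succ Q s j
    have hidx : j + 1 + m + 1 = j + (m + 1) + 1 := by omega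
    rw [hidx] at hIH
    have hpow : Q ^ (s - j) = Q ^ (s - (j + 1)) * Q := by
      rw [← pow_succ]
      congr 1
      omega
    have hQpos : (0 : ℤ) < Q ^ (s - (j + 1)) := by positivity
    rcases Nat.even_or_odd j with hpar | hpar
    · have hodd : Odd (j + 1) := Even.add_one hpar
      rw [Even.neg_one_pow hpar] at *
      rw [Odd.neg_one_pow hodd] at hIH
      constructor <;> nlinarith [hIH.1, hIH.2]
    · have heven : Even (j + 1) := Odd.add_one hpar
      rw [Odd.neg_one_pow hpar] at *
      rw [Even.neg_one_pow heven] at hIH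
      constructor <;> nlinarith [hIH.1, hIH.2]

lemma Aint_lt (Q : ℤ) (hQ : 2 ≤ Q) (s j k : ℕ) (hjk : j < k) (hk : k ≤ s) (hj : Even j) :
    Aint Q s j < Aint Q s k := by
  obtain ⟨m, rfl⟩ : ∃ m, k = j + m + 1 := ⟨k - j - 1, by omega⟩
  have := (Aint_ord Q hQ s m j (by omega)).1
  rw [Even.neg_one_pow hj] at this
  linarith

lemma Aint_gt (Q : ℤ) (hQ : 2 ≤ Q) (s j k : ℕ) (hjk : j < k) (hk : k ≤ s) (hj : Odd j) :
    Aint Q s k < Aint Q s j := by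
  obtain ⟨m, rfl⟩ : ∃ m, k = j + m + 1 := ⟨k - j - 1, by omega⟩
  have := (Aint_ord Q hQ s m j (by omega)).1
  rw [Odd.neg_one_pow hj] at this
  linarith

lemma Aint_pos (Q : ℤ) (hQ : 2 ≤ Q) (s k : ℕ) (h1 : 1 ≤ k) (hk : k ≤ s) :
    0 < Aint Q s k := by
  have := Aint_lt Q hQ s 0 k h1 hk Even.zero
  simpa [Aint] using this

lemma Aint_mul (Q : ℤ) (s k : ℕ) (hk : k ≤ s) :
    Q * Aint Q s (k + 1) = Q ^ (s + 1) - Aint Q s k := by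
  rw [Aint, Finset.mul_sum, Finset.sum_range_succ']
  have h0 : Q * ((-1 : ℤ) ^ 0 * Q ^ (s - 0)) = Q ^ (s + 1) := by
    simp [← pow_succ']
  rw [h0]
  have hterm : ∀ i ∈ Finset.range k, Q * ((-1 : ℤ) ^ (i + 1) * Q ^ (s - (i + 1)))
      = -((-1) ^ i * Q ^ (s - i)) := by
    intro i hi
    simp only [Finset.mem_range] at hi
    have : Q * Q ^ (s - (i + 1)) = Q ^ (s - i) := by
      rw [← pow_succ']
      congr 1
      omega
    rw [pow_succ, ← this]
    ring
  rw [Finset.sum_congr rfl hterm, Finset.sum_neg_distrib]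
  rw [show Aint Q s k = ∑ x ∈ Finset.range k, (-1 : ℤ) ^ x * Q ^ (s - x) from rfl]
  ring

variable {s : ℕ} {K : Type} [Field K]

noncomputable def eprod (P : Fin s → K) (e : Sym2 (Fin s)) : K :=
  Sym2.lift ⟨fun a b => P a * P b, fun _ _ => mul_comm _ _⟩ e

@[simp] lemma eprod_mk (P : Fin s → K) (a b : Fin s) : eprod P s(a, b) = P a * P b := rfl

lemma eprod_update (P : Fin s → K) (x : K) (v : Fin s) {e : Sym2 (Fin s)} (hv : v ∉ e) :
    eprod (Function.update P v x) e = eprod P e := by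
  induction e using Sym2.ind with
  | _ a b =>
    simp only [Sym2.mem_iff, not_or] at hv
    simp [Function.update_of_ne (Ne.symm hv.1), Function.update_of_ne (Ne.symm hv.2)]

def tupd (P : Torus s K) (v : Fin s) (x : K) (hx : x ≠ 0) : Torus s K :=
  ⟨Function.update P.1 v x, by
    intro i
    rcases eq_or_ne i v with rfl | h
    · simpa using hx
    · rw [Function.update_of_ne h]; exact P.2 i⟩

lemma card_torus [Fintype K] : Nat.card (Torus s K) = (Fintype.card K - 1) ^ s := by
  have e : Torus s K ≃ (Fin s → {x : K // x ≠ 0}) :=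
    Equiv.subtypePiEquivPi (p := fun _ b => b ≠ 0)
  rw [Nat.card_congr e, Nat.card_pi]
  have : Nat.card {x : K // x ≠ 0} = Fintype.card K - 1 := by
    classical
    rw [Nat.card_eq_fintype_card, Fintype.card_subtype_compl, Fintype.card_subtype_eq]
  simp [this]

lemma step_count [Fintype K] (v u : Fin s) (hvu : v ≠ u) (c₀ : K) (hc₀ : c₀ ≠ 0)
    (g : (Fin s → K) → K)
    (hg : ∀ (P : Fin s → K) (x : K), g (Function.update P v x) = g P) :
    Nat.card {P : Torus s K | c₀ * (P.1 v * P.1 u) + g P.1 = 0} * (Fintype.card K - 1)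
      + Nat.card {P : Torus s K | g P.1 = 0} = (Fintype.card K - 1) ^ s := by
  have key : ∀ (Q : Torus s K), g Q.1 ≠ 0 → (-(g Q.1) * (c₀ * Q.1 u)⁻¹) ≠ 0 := fun Q hQ =>
    mul_ne_zero (neg_ne_zero.2 hQ) (inv_ne_zero (mul_ne_zero hc₀ (Q.2 u)))
  have upd_u : ∀ (P : Fin s → K) (x : K), Function.update P v x u = P u := fun P x =>
    Function.update_of_ne hvu.symm x P
  have e1 : {P : Torus s K | c₀ * (P.1 v * P.1 u) + g P.1 = 0} ≃
      {P : Torus s K | P.1 v = 1 ∧ g P.1 ≠ 0} := by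
    refine ⟨fun P => ⟨tupd P.1 v 1 one_ne_zero, ?_, ?_⟩,
      fun Q => ⟨tupd Q.1 v (-(g Q.1.1) * (c₀ * Q.1.1 u)⁻¹) (key Q.1 Q.2.2), ?_⟩, ?_, ?_⟩
    · simp [tupd]
    · obtain ⟨P, hP⟩ := P
      simp only [Set.mem_setOf_eq] at hP
      have hgP : g P.1 = -(c₀ * (P.1 v * P.1 u)) := by linear_combination hP
      simp only [tupd, hg, hgP]
      exact neg_ne_zero.2 (mul_ne_zero hc₀ (mul_ne_zero (P.2 v) (P.2 u)))
    · obtain ⟨Q, hQ1, hQ2⟩ := Q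
      simp only [Set.mem_setOf_eq, tupd, hg, upd_u, Function.update_self]
      have h1 : c₀ * Q.1 u ≠ 0 := mul_ne_zero hc₀ (Q.2 u)
      rw [show c₀ * ((-(g Q.1) * (c₀ * Q.1 u)⁻¹) * Q.1 u)
            = -(g Q.1) * ((c₀ * Q.1 u)⁻¹ * (c₀ * Q.1 u)) from by ring,
          inv_mul_cancel₀ h1, mul_one, neg_add_cancel]
    · rintro ⟨P, hP⟩
      simp only [Set.mem_setOf_eq] at hP
      apply Subtype.ext; apply Subtype.ext
      simp only [tupd, hg, upd_u, Function.update_idem]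
      have hPv : -(g P.1) * (c₀ * P.1 u)⁻¹ = P.1 v := by
        have h1 : c₀ * P.1 u ≠ 0 := mul_ne_zero hc₀ (P.2 u)
        have h2 : P.1 v * (c₀ * P.1 u) = -(g P.1) := by linear_combination hP
        rw [← h2, mul_assoc, mul_inv_cancel₀ h1, mul_one]
      rw [hPv, Function.update_eq_self]
    · rintro ⟨Q, hQ1, hQ2⟩
      apply Subtype.ext; apply Subtype.ext
      simp only [tupd, hg, upd_u, Function.update_idem]
      rw [← hQ1, Function.update_eq_self]
  have e2 : {P : Torus s K | g P.1 ≠ 0} ≃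
      ({x : K // x ≠ 0} × {P : Torus s K | P.1 v = 1 ∧ g P.1 ≠ 0}) := by
    refine ⟨fun P => ⟨⟨P.1.1 v, P.1.2 v⟩, ⟨tupd P.1 v 1 one_ne_zero, ?_, ?_⟩⟩,
      fun aQ => ⟨tupd aQ.2.1 v aQ.1.1 aQ.1.2, ?_⟩, ?_, ?_⟩
    · simp [tupd]
    · simp only [tupd, hg]; exact P.2
    · simp only [Set.mem_setOf_eq, tupd, hg]; exact aQ.2.2.2
    · rintro ⟨P, hP⟩
      apply Subtype.ext; apply Subtype.ext
      simp only [tupd, Function.update_idem, Function.update_eq_self]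
    · rintro ⟨⟨a, ha⟩, ⟨Q, hQ1, hQ2⟩⟩
      refine Prod.ext ?_ ?_
      · apply Subtype.ext; simp [tupd]
      · apply Subtype.ext; apply Subtype.ext
        simp only [tupd, Function.update_idem]
        rw [← hQ1, Function.update_eq_self]
  have hcard1 : Nat.card {x : K // x ≠ 0} = Fintype.card K - 1 := by
    classical
    rw [Nat.card_eq_fintype_card, Fintype.card_subtype_compl, Fintype.card_subtype_eq]
  have h1 := Nat.card_congr e1
  have h2 : Nat.card {P : Torus s K | g P.1 ≠ 0}
      = (Fintype.card K - 1) * Nat.card {P : Torus s K | P.1 v = 1 ∧ g P.1 ≠ 0} := by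
    rw [Nat.card_congr e2, Nat.card_prod, hcard1]
  have h3 : Nat.card {P : Torus s K | g P.1 ≠ 0} + Nat.card {P : Torus s K | g P.1 = 0}
      = (Fintype.card K - 1) ^ s := by
    rw [← card_torus (s := s) (K := K)]
    have hc : {P : Torus s K | g P.1 ≠ 0} = {P : Torus s K | g P.1 = 0}ᶜ := by
      ext P; simp
    rw [hc, Nat.card_coe_set_eq, Nat.card_coe_set_eq, add_comm]
    exact Set.ncard_add_ncard_compl _
  rw [h1, mul_comm, ← h2]
  exact h3

open SimpleGraph in
lemma exists_leaf (G : SimpleGraph (Fin s)) (hG : G.IsTree)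
    (F : Finset (Sym2 (Fin s))) (hne : F.Nonempty) (hsub : ↑F ⊆ G.edgeSet) :
    ∃ e ∈ F, ∃ v u : Fin s, e = s(v, u) ∧ v ≠ u ∧ ∀ e' ∈ F, e' ≠ e → v ∉ e' := by
  classical
  obtain ⟨e₀, he₀⟩ := hne
  have hr : Nonempty (Fin s) := hG.isConnected.nonempty
  obtain ⟨r⟩ := hr
  have hup' : ∀ x, ∃! p : G.Walk x r, p.IsPath := fun x => hG.existsUnique_path x r
  choose pth hpath hup using hup'
  set d : Fin s → ℕ := fun x => (pth x).length with hd
  set VF : Finset (Fin s) := Finset.univ.filter (fun x : Fin s => ∃ e ∈ F, x ∈ e) with hVF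
  have hVFne : VF.Nonempty := ⟨e₀.out.1, by
    simp only [hVF, Finset.mem_filter, Finset.mem_univ, true_and]
    exact ⟨e₀, he₀, Sym2.out_fst_mem e₀⟩⟩
  obtain ⟨v, hvVF, hmax⟩ := VF.exists_max_image d hVFne
  simp only [hd] at hmax
  have hvVF' : ∃ e ∈ F, v ∈ e := by
    simpa only [hVF, Finset.mem_filter, Finset.mem_univ, true_and] using hvVF
  obtain ⟨e, heF, hve⟩ := hvVF'
  obtain ⟨u, rfl⟩ := Sym2.mem_iff_exists.1 hve
  have hadj : G.Adj v u := (G.mem_edgeSet).1 (hsub heF)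
  have key : ∀ x, G.Adj v x → d x ≤ d v → x = (pth v).getVert 1 := by
    intro x hx hdx
    by_cases hvmem : v ∈ (pth x).support
    · exfalso
      have hdrop : (pth x).dropUntil v hvmem = pth v :=
        hup v _ ((hpath x).dropUntil hvmem)
      have htake : (pth x).takeUntil v hvmem = Walk.cons hx.symm Walk.nil :=
        (hG.existsUnique_path x v).unique ((hpath x).takeUntil hvmem)
          (by simp [Walk.cons_isPath_iff, hx.ne'])
      have hspec := Walk.take_spec (pth x) hvmem
      have hlen := congrArg Walk.length hspec
      rw [Walk.length_append, hdrop, htake] at hlen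
      simp only [Walk.length_cons, Walk.length_nil] at hlen
      have hdx' : (pth x).length ≤ (pth v).length := hdx
      omega
    · have hcons : Walk.cons hx (pth x) = pth v :=
        hup v _ (by simp [Walk.cons_isPath_iff, hpath x, hvmem])
      have := congrArg (fun p => Walk.getVert p 1) hcons
      simpa [Walk.getVert_cons _ _ one_ne_zero, Walk.getVert_zero] using this
  refine ⟨s(v, u), heF, v, u, rfl, hadj.ne, ?_⟩
  intro e' he'F hne' hve'
  obtain ⟨w, rfl⟩ := Sym2.mem_iff_exists.1 hve'
  have hadj' : G.Adj v w := (G.mem_edgeSet).1 (hsub he'F)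
  have hmem : ∀ y (ey : Sym2 (Fin s)), ey ∈ F → y ∈ ey → y ∈ VF := by
    intro y ey hey hyey
    simp only [hVF, Finset.mem_filter, Finset.mem_univ, true_and]
    exact ⟨ey, hey, hyey⟩
  have hu := key u hadj (hmax u (hmem u s(v, u) heF (Sym2.mem_mk_right v u)))
  have hw := key w hadj' (hmax w (hmem w s(v, w) he'F (Sym2.mem_mk_right v w)))
  exact hne' (by rw [hu, ← hw])

end Aux


section Aux2

variable {s : ℕ} {K : Type} [Field K]

lemma edgeMonSym2_mk (a b : Fin s) : edgeMonSym2 s K s(a, b) = X a * X b := rfl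

lemma evalTorus_sum_apply (F : Finset (Sym2 (Fin s))) (c : Sym2 (Fin s) → K) (P : Torus s K) :
    evalTorus s K (∑ e ∈ F, c e • edgeMonSym2 s K e) P = ∑ e ∈ F, c e * eprod P.1 e := by
  have h0 : evalTorus s K (∑ e ∈ F, c e • edgeMonSym2 s K e) P
      = aeval (P.1) (∑ e ∈ F, c e • edgeMonSym2 s K e) := rfl
  rw [h0, map_sum]
  refine Finset.sum_congr rfl fun e _ => ?_
  induction e using Sym2.ind with
  | _ a b =>
    rw [edgeMonSym2_mk, eprod_mk, smul_eq_C_mul, map_mul, map_mul, aeval_X, aeval_X, aeval_C]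
    simp [Algebra.algebraMap_self_apply, mul_assoc]

omit [Field K] in
lemma card_le_edges {G : SimpleGraph (Fin s)} (hG : G.IsTree)
    {F : Finset (Sym2 (Fin s))} (hsub : ↑F ⊆ G.edgeSet) : F.card ≤ s - 1 := by
  classical
  have hF : F ⊆ G.edgeFinset := fun e he => SimpleGraph.mem_edgeFinset.2 (hsub he)
  have h1 := Finset.card_le_card hF
  have h2 := hG.card_edgeFinset
  rw [Fintype.card_fin] at h2
  omega

lemma main_count [Fintype K] {G : SimpleGraph (Fin s)} (hG : G.IsTree) :
    ∀ (n : ℕ) (F : Finset (Sym2 (Fin s))), F.card = n → ↑F ⊆ G.edgeSet →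
      ∀ c : Sym2 (Fin s) → K, (∀ e ∈ F, c e ≠ 0) →
      (Nat.card {P : Torus s K | ∑ e ∈ F, c e * eprod P.1 e = 0} : ℤ)
        = ((Fintype.card K - 1 : ℕ) : ℤ) ^ s - Aint ((Fintype.card K - 1 : ℕ) : ℤ) s n := by
  intro n
  induction n with
  | zero =>
    intro F hcard hsub c hc
    rw [Finset.card_eq_zero] at hcard
    subst hcard
    have hset : {P : Torus s K | ∑ e ∈ (∅ : Finset (Sym2 (Fin s))), c e * eprod P.1 e = 0}
        = Set.univ := by
      ext P; simp
    rw [hset, Nat.card_coe_set_eq, Set.ncard_univ, card_torus]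
    simp [Aint]
  | succ n ih =>
    intro F hcard hsub c hc
    have hne : F.Nonempty := Finset.card_pos.1 (by omega)
    obtain ⟨e, heF, v, u, he, hvu, hleaf⟩ := exists_leaf G hG F hne hsub
    subst he
    have hset : {P : Torus s K | ∑ e' ∈ F, c e' * eprod P.1 e' = 0}
        = {P : Torus s K | (c s(v, u)) * (P.1 v * P.1 u)
            + (∑ e' ∈ F.erase s(v, u), c e' * eprod P.1 e') = 0} := by
      ext P
      simp only [Set.mem_setOf_eq]
      rw [← Finset.add_sum_erase F (fun e' => c e' * eprod P.1 e') heF, eprod_mk]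
    have hg : ∀ (P : Fin s → K) (x : K),
        (∑ e' ∈ F.erase s(v, u), c e' * eprod (Function.update P v x) e')
          = ∑ e' ∈ F.erase s(v, u), c e' * eprod P e' := fun P x =>
      Finset.sum_congr rfl fun e' he' => by
        rw [eprod_update P x v
          (hleaf e' (Finset.mem_of_mem_erase he') (Finset.ne_of_mem_erase he'))]
    have hstep := step_count v u hvu (c s(v, u)) (hc _ heF)
        (fun P => ∑ e' ∈ F.erase s(v, u), c e' * eprod P e') hg
    have hih := ih (F.erase s(v, u))
        (by rw [Finset.card_erase_of_mem heF, hcard]; rfl)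
        (Set.Subset.trans (by exact_mod_cast Finset.coe_subset.2 (Finset.erase_subset _ _)) hsub)
        c (fun e' he' => hc e' (Finset.mem_of_mem_erase he'))
    have hns : n ≤ s := by
      have := card_le_edges hG hsub
      omega
    have hQ1 : 1 ≤ Fintype.card K - 1 := by
      have := Fintype.one_lt_card (α := K)
      omega
    have hQne : ((Fintype.card K - 1 : ℕ) : ℤ) ≠ 0 := by
      exact_mod_cast Nat.one_le_iff_ne_zero.1 hQ1
    rw [hset]
    apply mul_right_cancel₀ hQne
    have hstep' : (Nat.card {P : Torus s K | (c s(v, u)) * (P.1 v * P.1 u)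
            + (∑ e' ∈ F.erase s(v, u), c e' * eprod P.1 e') = 0} : ℤ)
          * ((Fintype.card K - 1 : ℕ) : ℤ)
        + (Nat.card {P : Torus s K | ∑ e' ∈ F.erase s(v, u), c e' * eprod P.1 e' = 0} : ℤ)
        = ((Fintype.card K - 1 : ℕ) : ℤ) ^ s := by
      exact_mod_cast congrArg (Nat.cast : ℕ → ℤ) hstep
    have hmul := Aint_mul ((Fintype.card K - 1 : ℕ) : ℤ) s n hns
    rw [pow_succ] at hmul
    linear_combination hstep' - hih + hmul

lemma wt_plus_zeros [Fintype K] (F : Finset (Sym2 (Fin s))) (c : Sym2 (Fin s) → K) :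
    wt (evalTorus s K (∑ e ∈ F, c e • edgeMonSym2 s K e))
      + Nat.card {P : Torus s K | ∑ e ∈ F, c e * eprod P.1 e = 0}
      = (Fintype.card K - 1) ^ s := by
  rw [wt]
  have hset : {P : Torus s K | evalTorus s K (∑ e ∈ F, c e • edgeMonSym2 s K e) P ≠ 0}
      = {P : Torus s K | ∑ e ∈ F, c e * eprod P.1 e = 0}ᶜ := by
    ext P
    simp [evalTorus_sum_apply]
  rw [hset, ← card_torus (s := s) (K := K), Nat.card_coe_set_eq, add_comm]
  exact Set.ncard_add_ncard_compl _

lemma weights_iff [Fintype K] (hK3 : 3 ≤ Fintype.card K)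
    {G : SimpleGraph (Fin s)} (hG : G.IsTree) (w : ℕ) :
    (∃ c ∈ graphCode s K G, c ≠ 0 ∧ wt c = w) ↔
      ∃ k : ℕ, 1 ≤ k ∧ k ≤ s - 1 ∧ (w : ℤ) = Aint ((Fintype.card K - 1 : ℕ) : ℤ) s k := by
  classical
  have hQ2 : (2 : ℤ) ≤ ((Fintype.card K - 1 : ℕ) : ℤ) := by
    have : 2 ≤ Fintype.card K - 1 := by omega
    exact_mod_cast this
  constructor
  · rintro ⟨cw, hcw, hc0, rfl⟩
    obtain ⟨f, hf, rfl⟩ := Submodule.mem_map.1 hcw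
    rw [Finsupp.mem_span_image_iff_linearCombination] at hf
    obtain ⟨l, hlsupp, rfl⟩ := hf
    have hlin : Finsupp.linearCombination K (edgeMonSym2 s K) l
        = ∑ e ∈ l.support, l e • edgeMonSym2 s K e := by
      rw [Finsupp.linearCombination_apply, Finsupp.sum]
    rw [hlin] at hc0 ⊢
    have hsub' : ↑l.support ⊆ G.edgeSet := Finsupp.mem_supported K l |>.1 hlsupp
    have hcnz : ∀ e ∈ l.support, l e ≠ 0 := fun e he => Finsupp.mem_support_iff.1 he
    have hk1 : 1 ≤ l.support.card := by
      rcases Finset.eq_empty_or_nonempty l.support with hemp | hne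
      · exfalso
        apply hc0
        rw [hemp, Finset.sum_empty, map_zero]
      · exact Finset.card_pos.2 hne
    refine ⟨l.support.card, hk1, card_le_edges hG hsub', ?_⟩
    have h1 := wt_plus_zeros l.support (fun e => l e)
    have h2 := main_count hG l.support.card l.support rfl hsub' (fun e => l e) hcnz
    have h1' : (wt (evalTorus s K (∑ e ∈ l.support, l e • edgeMonSym2 s K e)) : ℤ)
        + (Nat.card {P : Torus s K | ∑ e ∈ l.support, l e * eprod P.1 e = 0} : ℤ)
        = ((Fintype.card K - 1 : ℕ) : ℤ) ^ s := by
      exact_mod_cast congrArg (Nat.cast : ℕ → ℤ) h1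
    linarith [h1', h2]
  · rintro ⟨k, hk1, hk2, hw⟩
    have hcard : k ≤ G.edgeFinset.card := by
      have h2 := hG.card_edgeFinset
      rw [Fintype.card_fin] at h2
      omega
    obtain ⟨F, hFsub, hFcard⟩ := Finset.exists_subset_card_eq hcard
    have hsub' : ↑F ⊆ G.edgeSet := fun e he => SimpleGraph.mem_edgeFinset.1 (hFsub he)
    have hcnz : ∀ e ∈ F, (fun _ : Sym2 (Fin s) => (1 : K)) e ≠ 0 := fun e _ => one_ne_zero
    have h1 := wt_plus_zeros F (fun _ => (1 : K))
    have h2 := main_count hG k F hFcard hsub' (fun _ => (1 : K)) hcnz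
    have h1' : (wt (evalTorus s K (∑ e ∈ F, (1 : K) • edgeMonSym2 s K e)) : ℤ)
        + (Nat.card {P : Torus s K | ∑ e ∈ F, 1 * eprod P.1 e = 0} : ℤ)
        = ((Fintype.card K - 1 : ℕ) : ℤ) ^ s := by
      exact_mod_cast congrArg (Nat.cast : ℕ → ℤ) h1
    have hwt : (wt (evalTorus s K (∑ e ∈ F, (1 : K) • edgeMonSym2 s K e)) : ℤ)
        = Aint ((Fintype.card K - 1 : ℕ) : ℤ) s k := by
      linarith [h1', h2]
    have hks : k ≤ s := by omega
    have hpos := Aint_pos _ hQ2 s k hk1 hks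
    refine ⟨evalTorus s K (∑ e ∈ F, (1 : K) • edgeMonSym2 s K e), ?_, ?_, ?_⟩
    · exact Submodule.mem_map_of_mem (Submodule.sum_mem _ fun e he =>
        Submodule.smul_mem _ _ (Submodule.subset_span
          ⟨e, SimpleGraph.mem_edgeFinset.1 (hFsub he), rfl⟩))
    · intro h0
      rw [h0] at hwt
      have : wt (0 : Torus s K → K) = 0 := by
        simp [wt]
      rw [this] at hwt
      omega
    · have : (wt (evalTorus s K (∑ e ∈ F, (1 : K) • edgeMonSym2 s K e)) : ℤ) = (w : ℤ) := by
        rw [hwt, hw]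
      exact_mod_cast this

end Aux2

/-- let `q ≥ 3` and let `G` be a connected tree on `{1,…,s}`, `s ≥ 3`.
For `1 ≤ t ≤ (s-1)/2`, the `t`-th smallest Hamming weight of a nonzero codeword of the
edge code `C_G` equals `Σ_{i=0}^{2t-1} (-1)^i (q-1)^{s-i}`. -/
theorem edgeCode_tree_hamming_weights
    (q s t : ℕ) (hq : 3 ≤ q) (hs : 3 ≤ s)
    (K : Type) [Field K] [Fintype K] (hK : Fintype.card K = q)
    (G : SimpleGraph (Fin s)) (hG : G.IsTree)
    (ht1 : 1 ≤ t) (ht2 : 2 * t + 1 ≤ s) :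
    (Nat.nth
        (fun w => w ∈ {w : ℕ | ∃ c ∈ graphCode s K G, c ≠ 0 ∧ wt c = w}) (t - 1) : ℤ)
      = ∑ i ∈ Finset.range (2 * t), (-1) ^ i * ((q : ℤ) - 1) ^ (s - i) := by
  classical
  have hK3 : 3 ≤ Fintype.card K := by rw [hK]; exact hq
  have hQ2 : (2 : ℤ) ≤ ((Fintype.card K - 1 : ℕ) : ℤ) := by
    have : 2 ≤ Fintype.card K - 1 := by omega
    exact_mod_cast this
  set Q : ℤ := ((Fintype.card K - 1 : ℕ) : ℤ) with hQdef
  set P : ℕ → Prop := fun w => w ∈ {w : ℕ | ∃ c ∈ graphCode s K G, c ≠ 0 ∧ wt c = w}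
    with hPdef
  have hchar : ∀ w, P w ↔ ∃ k, 1 ≤ k ∧ k ≤ s - 1 ∧ (w : ℤ) = Aint Q s k := fun w =>
    weights_iff hK3 hG w
  have h2ts : 2 * t ≤ s - 1 := by omega
  have hpos2t := Aint_pos Q hQ2 s (2 * t) (by omega) (by omega)
  set w₀ : ℕ := (Aint Q s (2 * t)).toNat with hw₀def
  have hw₀ : (w₀ : ℤ) = Aint Q s (2 * t) := Int.toNat_of_nonneg hpos2t.le
  have hPw₀ : P w₀ := (hchar w₀).2 ⟨2 * t, by omega, h2ts, hw₀⟩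
  have hcount : Nat.count P w₀ = t - 1 := by
    rw [Nat.count_eq_card_filter_range]
    have himg : (Finset.range w₀).filter P
        = (Finset.range (t - 1)).image (fun a => (Aint Q s (2 * (a + 1))).toNat) := by
      ext x
      simp only [Finset.mem_filter, Finset.mem_range, Finset.mem_image]
      constructor
      · rintro ⟨hxlt, hPx⟩
        obtain ⟨k, hk1, hk2, hxk⟩ := (hchar x).1 hPx
        have hks : k ≤ s := by omega
        have hlt : Aint Q s k < Aint Q s (2 * t) := by
          rw [← hxk, ← hw₀]
          exact_mod_cast hxlt
        rcases Nat.even_or_odd k with hke | hko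
        · have hklt : k < 2 * t := by
            by_contra hcon
            push_neg at hcon
            rcases Nat.eq_or_lt_of_le hcon with heq | hgt
            · rw [← heq] at hlt
              exact lt_irrefl _ hlt
            · exact absurd (Aint_lt Q hQ2 s (2 * t) k hgt hks ⟨t, by ring⟩) (by linarith)
          obtain ⟨m, hm⟩ := hke
          have hm1 : 1 ≤ m := by omega
          refine ⟨m - 1, by omega, ?_⟩
          have h2m : 2 * (m - 1 + 1) = k := by omega
          rw [h2m, ← hxk, Int.toNat_natCast]
        · exfalso
          rcases Nat.lt_trichotomy k (2 * t) with hlt' | heq | hgt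
          · exact absurd (Aint_gt Q hQ2 s k (2 * t) hlt' (by omega) hko) (by linarith)
          · have heven : Even (2 * t) := ⟨t, by ring⟩
            rw [heq] at hko
            exact (Nat.not_odd_iff_even.2 heven) hko
          · exact absurd (Aint_lt Q hQ2 s (2 * t) k hgt hks ⟨t, by ring⟩) (by linarith)
      · rintro ⟨a, ha, rfl⟩
        have hle : 2 * (a + 1) ≤ s - 1 := by omega
        have hposA := Aint_pos Q hQ2 s (2 * (a + 1)) (by omega) (by omega)
        have hcast : ((Aint Q s (2 * (a + 1))).toNat : ℤ) = Aint Q s (2 * (a + 1)) :=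
          Int.toNat_of_nonneg hposA.le
        have hmono := Aint_lt Q hQ2 s (2 * (a + 1)) (2 * t) (by omega) (by omega)
          ⟨a + 1, by ring⟩
        constructor
        · omega
        · exact (hchar _).2 ⟨2 * (a + 1), by omega, hle, hcast⟩
    rw [himg, Finset.card_image_of_injOn, Finset.card_range]
    intro a ha b hb hab
    simp only [Finset.coe_range, Set.mem_Iio] at ha hb
    by_contra hne
    have hkey : ∀ a' b' : ℕ, a' < t - 1 → b' < t - 1 → a' < b' →
        (Aint Q s (2 * (a' + 1))).toNat ≠ (Aint Q s (2 * (b' + 1))).toNat := by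
      intro a' b' ha' hb' hab'
      have h1 := Aint_pos Q hQ2 s (2 * (a' + 1)) (by omega) (by omega)
      have h2 := Aint_pos Q hQ2 s (2 * (b' + 1)) (by omega) (by omega)
      have h3 := Aint_lt Q hQ2 s (2 * (a' + 1)) (2 * (b' + 1)) (by omega) (by omega)
        ⟨a' + 1, by ring⟩
      omega
    rcases Nat.lt_or_ge a b with h | h
    · exact hkey a b ha hb h hab
    · exact hkey b a hb ha (by omega) hab.symm
  have hnth := Nat.nth_count (p := P) hPw₀
  rw [hcount] at hnth
  rw [hnth, hw₀]
  have hQq : Q = (q : ℤ) - 1 := by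
    rw [hQdef, hK]
    omega
  rw [Aint, hQq]
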